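/- Let f_W : ℝ^d → ℝ^k with f_W(x) = σ(Wx) be a single neural network layer, where W ∈ ℝ^{k×d} and σ : ℝ → ℝ is C-Lipschitz and applied elementwise. Let G be a compact group with orthogonal representations φ on ℝ^d and ψ on ℝ^k such that σ(ψ(g)v) = ψ(g)σ(v) for all g ∈ G, v ∈ ℝ^k. Let μ be a G-invariant probability measure on ℝ^d with finite covariance matrix Σ = ∫ x xᵀ dμ(x), and assume f_W ∈ L2(ℝ^d, ℝ^k, μ). Write W̄ = ∫_G ψ(g⁻¹) W φ(g) dλ(g) and W⊥ = W − W̄. Then the squared L2 distance from f_W to its equivariant projection satisfies ‖(id − Q) f_W‖_μ² ≤ 2C² ‖W⊥ Σ^{1/2}‖_F² ≤ 2C² ‖Σ^{1/2}‖_F² ‖W⊥‖_F². -/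

import Mathlib

open MeasureTheory Matrix
open scoped ENNReal

open scoped ComplexOrder in
/-- The positive semidefinite square root, as defined in the older Mathlib
(`Matrix.PosSemidef.sqrt`, since removed). -/
noncomputable def Matrix.PosSemidef.sqrt {n : Type*} [Fintype n] [DecidableEq n]
    {𝕜 : Type*} [RCLike 𝕜] {A : Matrix n n 𝕜} (hA : A.PosSemidef) : Matrix n n 𝕜 :=
  (hA.1.eigenvectorUnitary : Matrix n n 𝕜) *
    Matrix.diagonal (fun i => ((Real.sqrt (hA.1.eigenvalues i) : ℝ) : 𝕜)) *
    star (hA.1.eigenvectorUnitary : Matrix n n 𝕜)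

lemma aux_sq_integral_le {α : Type*} [MeasurableSpace α] (ν : Measure α) [IsProbabilityMeasure ν]
    {h : α → ℝ} (h1 : Integrable h ν) (h2 : Integrable (fun a => h a ^ 2) ν) :
    (∫ a, h a ∂ν) ^ 2 ≤ ∫ a, h a ^ 2 ∂ν := by
  set c := ∫ a, h a ∂ν with hc
  have h0 : 0 ≤ ∫ a, (h a - c) ^ 2 ∂ν := integral_nonneg fun a => sq_nonneg _
  have ia : Integrable (fun a => h a ^ 2 - 2 * c * h a) ν := h2.sub (h1.const_mul (2 * c))
  have e1 : ∫ a, (h a - c) ^ 2 ∂ν = (∫ a, h a ^ 2 ∂ν) - 2 * c * c + c ^ 2 := by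
    have e0 : (fun a => (h a - c) ^ 2) = fun a => (h a ^ 2 - 2 * c * h a) + c ^ 2 := by
      funext a; ring
    rw [e0, integral_add ia (integrable_const _),
      integral_sub h2 (h1.const_mul (2 * c)), integral_const_mul, integral_const]
    simp [← hc]
  nlinarith

lemma aux_trace_sq {m n : ℕ} (A : Matrix (Fin m) (Fin n) ℝ) :
    (Aᵀ * A).trace = ∑ j, ∑ i, (A i j) ^ 2 := by
  simp [Matrix.trace, Matrix.diag, Matrix.mul_apply, sq]

lemma aux_frob_submul {k d : ℕ} (B : Matrix (Fin k) (Fin d) ℝ) (S : Matrix (Fin d) (Fin d) ℝ) :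
    ((B * S)ᵀ * (B * S)).trace ≤ (Sᵀ * S).trace * (Bᵀ * B).trace := by
  rw [aux_trace_sq, aux_trace_sq, aux_trace_sq]
  calc ∑ j, ∑ i, ((B * S) i j) ^ 2
      ≤ ∑ j : Fin d, ∑ i : Fin k, (∑ l, (B i l) ^ 2) * (∑ l, (S l j) ^ 2) := by
        refine Finset.sum_le_sum fun j _ => Finset.sum_le_sum fun i _ => ?_
        rw [Matrix.mul_apply]
        exact Finset.sum_mul_sq_le_sq_mul_sq _ _ _
    _ = (∑ j : Fin d, ∑ l, (S l j) ^ 2) * (∑ i : Fin k, ∑ l, (B i l) ^ 2) := by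
        rw [Finset.sum_comm (s := Finset.univ) (t := Finset.univ)
          (f := fun j i => (∑ l, (B i l) ^ 2) * (∑ l, (S l j) ^ 2))]
        simp_rw [← Finset.mul_sum, ← Finset.sum_mul]
        ring
    _ = (∑ j : Fin d, ∑ i, (S i j) ^ 2) * (∑ j : Fin d, ∑ i : Fin k, (B i j) ^ 2) := by
        rw [Finset.sum_comm (s := Finset.univ) (t := Finset.univ)
          (f := fun i l => (B i l) ^ 2)]

/-- The distance in `L2(μ)` from a single neural network layer `f_W(x) = σ(Wx)` (with
`C`-Lipschitz elementwise activation commuting with `ψ`) to its equivariant projection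
`Q f_W` is controlled by the `G`-anti-symmetric part `W⊥ = W − W̄` of the weights:
`‖(id − Q) f_W‖_μ² ≤ 2C² ‖W⊥ Σ^{1/2}‖_F² ≤ 2C² ‖Σ^{1/2}‖_F² ‖W⊥‖_F²`. -/
theorem stmt_19 {G : Type*} [Group G] [TopologicalSpace G] [IsTopologicalGroup G]
    [CompactSpace G] [SecondCountableTopology G] [T2Space G]
    [MeasurableSpace G] [BorelSpace G]
    (lam : Measure G) [IsProbabilityMeasure lam]
    (hlam_left : ∀ g : G, Measure.map (fun h => g * h) lam = lam)
    (hlam_inv : Measure.map (fun g : G => g⁻¹) lam = lam)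
    {d k : ℕ}
    (φ : G → Matrix (Fin d) (Fin d) ℝ)
    (hφ_meas : ∀ i j, Measurable fun g => φ g i j)
    (hφ_one : φ 1 = 1)
    (hφ_mul : ∀ g h, φ (g * h) = φ g * φ h)
    (hφ_orth : ∀ g, (φ g)ᵀ * φ g = 1)
    (ψ : G → Matrix (Fin k) (Fin k) ℝ)
    (hψ_meas : ∀ i j, Measurable fun g => ψ g i j)
    (hψ_one : ψ 1 = 1)
    (hψ_mul : ∀ g h, ψ (g * h) = ψ g * ψ h)
    (hψ_orth : ∀ g, (ψ g)ᵀ * ψ g = 1)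
    -- the activation function
    (C : ℝ) (hC : 0 ≤ C)
    (σ : ℝ → ℝ)
    (hσ_lip : ∀ a b, |σ a - σ b| ≤ C * |a - b|)
    (hσ_comm : ∀ g (v : Fin k → ℝ),
      (fun i => σ (((ψ g).mulVec v) i)) = (ψ g).mulVec (fun i => σ (v i)))
    -- the invariant input distribution and its covariance
    (μ : Measure (Fin d → ℝ)) [IsProbabilityMeasure μ]
    (hμ_inv : ∀ g : G, Measure.map ((φ g).mulVec) μ = μ)
    (hmom : ∀ i j, Integrable (fun x => x i * x j) μ)
    (Sig : Matrix (Fin d) (Fin d) ℝ)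
    (hSig : ∀ i j, Sig i j = ∫ x, x i * x j ∂μ)
    (hSig_psd : Sig.PosSemidef)
    -- the layer
    (W : Matrix (Fin k) (Fin d) ℝ)
    (hfW_L2 : MemLp (fun x => fun i => σ ((W.mulVec x) i)) 2 μ)
    (Wbar : Matrix (Fin k) (Fin d) ℝ)
    (hWbar : ∀ i j, Wbar i j = ∫ g, (ψ g⁻¹ * W * φ g) i j ∂lam) :
    (∫ x, ∑ i, (σ ((W.mulVec x) i)
        - (∫ g, (ψ g⁻¹).mulVec (fun i' => σ ((W.mulVec ((φ g).mulVec x)) i')) ∂lam) i) ^ 2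
        ∂μ)
      ≤ 2 * C ^ 2
          * (((W - Wbar) * hSig_psd.sqrt)ᵀ * ((W - Wbar) * hSig_psd.sqrt)).trace ∧
    2 * C ^ 2 * (((W - Wbar) * hSig_psd.sqrt)ᵀ * ((W - Wbar) * hSig_psd.sqrt)).trace
      ≤ 2 * C ^ 2 * (hSig_psd.sqrtᵀ * hSig_psd.sqrt).trace
          * ((W - Wbar)ᵀ * (W - Wbar)).trace := by
  classical
  set S : Matrix (Fin d) (Fin d) ℝ := hSig_psd.sqrt with hSdef
  have hS_symm : Sᵀ = S := by
    rw [hSdef, Matrix.PosSemidef.sqrt]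
    simp only [Matrix.transpose_mul, Matrix.star_eq_conjTranspose,
      Matrix.conjTranspose_eq_transpose_of_trivial, Matrix.diagonal_transpose,
      Matrix.transpose_transpose, Matrix.mul_assoc]
  have hSS : S * S = Sig := by
    have hU := hSig_psd.1.eigenvectorUnitary.2
    rw [hSdef, Matrix.PosSemidef.sqrt]
    conv_rhs => rw [hSig_psd.1.spectral_theorem]
    rw [Unitary.conjStarAlgAut_apply]
    have hUU : star (hSig_psd.1.eigenvectorUnitary : Matrix (Fin d) (Fin d) ℝ)
        * (hSig_psd.1.eigenvectorUnitary : Matrix (Fin d) (Fin d) ℝ) = 1 :=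
      Unitary.star_mul_self_of_mem hU
    simp only [Matrix.mul_assoc]
    rw [← Matrix.mul_assoc (star _) _ (Matrix.diagonal _ * _), hUU, Matrix.one_mul,
      ← Matrix.mul_assoc (Matrix.diagonal _) (Matrix.diagonal _), Matrix.diagonal_mul_diagonal]
    congr 2
    congr 1
    funext i
    simp [Real.mul_self_sqrt (hSig_psd.eigenvalues_nonneg i)]
  have hSig_symm : Sigᵀ = Sig := by
    have h := hSig_psd.1
    rwa [Matrix.IsHermitian, Matrix.conjTranspose_eq_transpose_of_trivial] at h
  have hσc : Continuous σ := by
    have hl : LipschitzWith (Real.toNNReal C) σ := by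
      refine LipschitzWith.of_dist_le_mul fun a b => ?_
      rw [Real.dist_eq, Real.dist_eq, Real.coe_toNNReal C hC]
      exact hσ_lip a b
    exact hl.continuous
  set M : G → Matrix (Fin k) (Fin d) ℝ := fun g => ψ g⁻¹ * W * φ g with hMdef
  have hWbarM : ∀ i j, Wbar i j = ∫ g, M g i j ∂lam := hWbar
  have hψi_meas : ∀ i j, Measurable fun g => ψ g⁻¹ i j :=
    fun i j => (hψ_meas i j).comp measurable_inv
  have hM_meas : ∀ i j, Measurable fun g => M g i j := by
    intro i j
    have he : (fun g => M g i j) = fun g => ∑ b, (∑ a, ψ g⁻¹ i a * W a b) * φ g b j := by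
      funext g; simp [hMdef, Matrix.mul_apply]
    rw [he]
    exact Finset.measurable_sum _ fun b _ =>
      (Finset.measurable_sum _ fun a _ => (hψi_meas i a).mul_const _).mul (hφ_meas b j)
  -- entry bounds
  have horth_bd : ∀ {n : ℕ} (A : Matrix (Fin n) (Fin n) ℝ), Aᵀ * A = 1 → ∀ i j, |A i j| ≤ 1 := by
    intro n A hA i j
    have h1 : ∑ l, A l j * A l j = 1 := by
      have h := congrFun (congrFun hA j) j
      simpa [Matrix.mul_apply, Matrix.one_apply] using h
    have h2 : A i j * A i j ≤ 1 := by
      rw [← h1]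
      exact Finset.single_le_sum (f := fun l => A l j * A l j)
        (fun l _ => mul_self_nonneg _) (Finset.mem_univ i)
    exact abs_le_one_iff_mul_self_le_one.mpr h2
  have hφ_bd : ∀ g i j, |φ g i j| ≤ 1 := fun g => horth_bd _ (hφ_orth g)
  have hψi_bd : ∀ g i j, |ψ g⁻¹ i j| ≤ 1 := fun g => horth_bd _ (hψ_orth g⁻¹)
  set K : ℝ := ∑ a : Fin k, ∑ b : Fin d, |W a b| with hKdef
  have hK0 : 0 ≤ K := Finset.sum_nonneg fun a _ => Finset.sum_nonneg fun b _ => abs_nonneg _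
  have hW_bd : ∀ i j, |W i j| ≤ K := by
    intro i j
    calc |W i j| ≤ ∑ b, |W i b| :=
          Finset.single_le_sum (f := fun b => |W i b|) (fun b _ => abs_nonneg _)
            (Finset.mem_univ j)
      _ ≤ K :=
          Finset.single_le_sum (f := fun a => ∑ b, |W a b|)
            (fun a _ => Finset.sum_nonneg fun b _ => abs_nonneg _) (Finset.mem_univ i)
  have hM_bd : ∀ g i j, |M g i j| ≤ K := by
    intro g i j
    have he : M g i j = ∑ b, ∑ a, ψ g⁻¹ i a * W a b * φ g b j := by
      simp [hMdef, Matrix.mul_apply, Finset.sum_mul]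
    rw [he]
    calc |∑ b, ∑ a, ψ g⁻¹ i a * W a b * φ g b j|
        ≤ ∑ b, |∑ a, ψ g⁻¹ i a * W a b * φ g b j| := Finset.abs_sum_le_sum_abs _ _
      _ ≤ ∑ b, ∑ a, |ψ g⁻¹ i a * W a b * φ g b j| :=
          Finset.sum_le_sum fun b _ => Finset.abs_sum_le_sum_abs _ _
      _ ≤ ∑ b : Fin d, ∑ a : Fin k, |W a b| := by
          refine Finset.sum_le_sum fun b _ => Finset.sum_le_sum fun a _ => ?_
          rw [abs_mul, abs_mul]
          calc |ψ g⁻¹ i a| * |W a b| * |φ g b j| ≤ 1 * |W a b| * 1 := by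
                gcongr
                · exact hψi_bd g i a
                · exact hφ_bd g b j
            _ = |W a b| := by ring
      _ = K := by rw [hKdef, Finset.sum_comm]
  have hWM_bd : ∀ g i j, |(W - M g) i j| ≤ 2 * K := by
    intro g i j
    have he : (W - M g) i j = W i j - M g i j := rfl
    rw [he]
    calc |W i j - M g i j| ≤ |W i j| + |M g i j| := abs_sub _ _
      _ ≤ K + K := add_le_add (hW_bd i j) (hM_bd g i j)
      _ = 2 * K := by ring
  -- integrability helper
  have hbint : ∀ (f : G → ℝ) (c : ℝ), Measurable f → (∀ g, |f g| ≤ c) → Integrable f lam := by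
    intro f c hm hb
    refine (integrable_const c).mono' hm.aestronglyMeasurable ?_
    filter_upwards with g
    simpa [Real.norm_eq_abs] using hb g
  have hMint : ∀ i j, Integrable (fun g => M g i j) lam :=
    fun i j => hbint _ K (hM_meas i j) (fun g => hM_bd g i j)
  -- right invariance of lam
  have hlam_right : ∀ g : G, Measure.map (fun h => h * g) lam = lam := by
    intro g
    have h1 : Measure.map (fun h : G => h * g) lam
        = Measure.map (fun h : G => h * g) (Measure.map (fun h : G => h⁻¹) lam) := by
      rw [hlam_inv]
    rw [h1, Measure.map_map (measurable_mul_const g) measurable_inv]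
    have h2 : ((fun h : G => h * g) ∘ fun h : G => h⁻¹)
        = (fun h : G => h⁻¹) ∘ (fun h : G => g⁻¹ * h) := by
      funext h; simp [_root_.mul_inv_rev]
    rw [h2, ← Measure.map_map measurable_inv (measurable_const_mul g⁻¹), hlam_left, hlam_inv]
  -- invariance of Sigma
  have hmulVec_meas : ∀ (A : Matrix (Fin d) (Fin d) ℝ), Measurable fun x : Fin d → ℝ => A.mulVec x := by
    intro A
    refine measurable_pi_lambda _ fun i => ?_
    have he : (fun x : Fin d → ℝ => A.mulVec x i) = fun x => ∑ j, A i j * x j := rfl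
    rw [he]
    exact Finset.measurable_sum _ fun j _ => (measurable_pi_apply j).const_mul _
  have hSinv : ∀ g, φ g * Sig * (φ g)ᵀ = Sig := by
    intro g
    ext i j
    have hmap : Sig i j = ∫ x, ((φ g).mulVec x) i * ((φ g).mulVec x) j ∂μ := by
      rw [hSig i j]
      conv_lhs => rw [← hμ_inv g]
      rw [integral_map (hmulVec_meas (φ g)).aemeasurable
        (f := fun x : Fin d → ℝ => x i * x j)
        (((measurable_pi_apply i).mul (measurable_pi_apply j)).aestronglyMeasurable)]
    have hval : ∫ x, ((φ g).mulVec x) i * ((φ g).mulVec x) j ∂μ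
        = ∑ a, ∑ b, φ g i a * φ g j b * Sig a b := by
      have hexp : ∀ x : Fin d → ℝ, ((φ g).mulVec x) i * ((φ g).mulVec x) j
          = ∑ a, ∑ b, φ g i a * φ g j b * (x a * x b) := by
        intro x
        have e1 : ((φ g).mulVec x) i = ∑ a, φ g i a * x a := rfl
        have e2 : ((φ g).mulVec x) j = ∑ b, φ g j b * x b := rfl
        rw [e1, e2, Finset.sum_mul_sum]
        exact Finset.sum_congr rfl fun a _ => Finset.sum_congr rfl fun b _ => by ring
      calc ∫ x, ((φ g).mulVec x) i * ((φ g).mulVec x) j ∂μ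
          = ∫ x, ∑ a, ∑ b, φ g i a * φ g j b * (x a * x b) ∂μ :=
            integral_congr_ae (Filter.Eventually.of_forall hexp)
        _ = ∑ a, ∑ b, φ g i a * φ g j b * Sig a b := by
            rw [integral_finset_sum _ fun a _ =>
              integrable_finset_sum _ fun b _ => ((hmom a b).const_mul _)]
            refine Finset.sum_congr rfl fun a _ => ?_
            rw [integral_finset_sum _ fun b _ => ((hmom a b).const_mul _)]
            refine Finset.sum_congr rfl fun b _ => ?_
            rw [integral_const_mul, hSig a b]
    have hLHS : (φ g * Sig * (φ g)ᵀ) i j = ∑ a, ∑ b, φ g i a * φ g j b * Sig a b := by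
      simp only [Matrix.mul_apply, Matrix.transpose_apply, Finset.sum_mul]
      rw [Finset.sum_comm]
      exact Finset.sum_congr rfl fun a _ => Finset.sum_congr rfl fun b _ => by ring
    rw [hLHS, ← hval, ← hmap]
  -- group identities
  have hψinv_mul : ∀ g : G, ψ g⁻¹ * ψ g = 1 := by
    intro g; rw [← hψ_mul, inv_mul_cancel, hψ_one]
  have hψmul_inv : ∀ g : G, ψ g * ψ g⁻¹ = 1 := by
    intro g; rw [← hψ_mul, mul_inv_cancel, hψ_one]
  have hψtr : ∀ g : G, (ψ g⁻¹)ᵀ = ψ g := by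
    intro g
    calc (ψ g⁻¹)ᵀ = (ψ g⁻¹)ᵀ * (ψ g⁻¹ * ψ g) := by rw [hψinv_mul, Matrix.mul_one]
      _ = ((ψ g⁻¹)ᵀ * ψ g⁻¹) * ψ g := by rw [Matrix.mul_assoc]
      _ = ψ g := by rw [hψ_orth g⁻¹, Matrix.one_mul]
  have hMT : ∀ g, (M g)ᵀ = (φ g)ᵀ * (Wᵀ * ψ g) := by
    intro g
    simp only [hMdef, Matrix.transpose_mul, hψtr, Matrix.mul_assoc]
  -- Wbar is fixed by the averaged conjugation
  have hexp3 : ∀ g (N : Matrix (Fin k) (Fin d) ℝ) (i : Fin k) (j : Fin d),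
      (ψ g⁻¹ * N * φ g) i j = ∑ b, ∑ a, ψ g⁻¹ i a * N a b * φ g b j := by
    intro g N i j
    simp only [Matrix.mul_apply, Finset.sum_mul]
  have hWbar_fix : ∀ g, ψ g⁻¹ * Wbar * φ g = Wbar := by
    intro g
    have hMg : ∀ h : G, ψ g⁻¹ * M h * φ g = M (h * g) := by
      intro h
      simp only [hMdef, _root_.mul_inv_rev, hψ_mul, hφ_mul, Matrix.mul_assoc]
    ext i j
    have hentry : (ψ g⁻¹ * Wbar * φ g) i j = ∫ h, (ψ g⁻¹ * M h * φ g) i j ∂lam := by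
      rw [hexp3]
      calc ∑ b, ∑ a, ψ g⁻¹ i a * Wbar a b * φ g b j
          = ∑ b, ∑ a, ∫ h, ψ g⁻¹ i a * M h a b * φ g b j ∂lam := by
            refine Finset.sum_congr rfl fun b _ => Finset.sum_congr rfl fun a _ => ?_
            rw [hWbarM a b, ← integral_const_mul, ← integral_mul_const]
        _ = ∫ h, ∑ b, ∑ a, ψ g⁻¹ i a * M h a b * φ g b j ∂lam := by
            rw [integral_finset_sum _ fun b _ => integrable_finset_sum _ fun a _ =>
              ((hMint a b).const_mul _).mul_const _]
            refine Finset.sum_congr rfl fun b _ => ?_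
            rw [integral_finset_sum _ fun a _ => ((hMint a b).const_mul _).mul_const _]
        _ = ∫ h, (ψ g⁻¹ * M h * φ g) i j ∂lam := by
            refine integral_congr_ae (Filter.Eventually.of_forall fun h => ?_)
            exact (hexp3 g (M h) i j).symm
    rw [hentry]
    have h1 : ∫ h, (ψ g⁻¹ * M h * φ g) i j ∂lam = ∫ h, M (h * g) i j ∂lam := by
      refine integral_congr_ae (Filter.Eventually.of_forall fun h => ?_)
      exact congrFun (congrFun (hMg h) i) j
    have h2 : ∫ h, M (h * g) i j ∂lam = ∫ h, M h i j ∂lam := by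
      conv_rhs => rw [← hlam_right g]
      rw [integral_map (measurable_mul_const g).aemeasurable (hM_meas i j).aestronglyMeasurable]
    rw [h1, h2, ← hWbarM]
  have hWbar_equiv : ∀ g, ψ g * Wbar = Wbar * φ g := by
    intro g
    calc ψ g * Wbar = ψ g * (ψ g⁻¹ * Wbar * φ g) := by rw [hWbar_fix g]
      _ = (ψ g * ψ g⁻¹) * (Wbar * φ g) := by simp only [Matrix.mul_assoc]
      _ = Wbar * φ g := by rw [hψmul_inv, Matrix.one_mul]
  -- trace identities
  have htrA : ∀ g, (M g * Sig * (M g)ᵀ).trace = (W * Sig * Wᵀ).trace := by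
    intro g
    have h2 : φ g * (Sig * ((φ g)ᵀ * (Wᵀ * ψ g))) = Sig * (Wᵀ * ψ g) := by
      have h3 := congrArg (fun X => X * (Wᵀ * ψ g)) (hSinv g)
      simpa [Matrix.mul_assoc] using h3
    have e : M g * Sig * (M g)ᵀ = ψ g⁻¹ * (W * (Sig * (Wᵀ * ψ g))) := by
      rw [hMT g]
      simp only [hMdef, Matrix.mul_assoc, h2]
    rw [e, Matrix.trace_mul_comm]
    have e2 : W * (Sig * (Wᵀ * ψ g)) * ψ g⁻¹ = W * (Sig * Wᵀ) := by
      simp only [Matrix.mul_assoc, hψmul_inv, Matrix.mul_one]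
    rw [e2, Matrix.mul_assoc]
  have htrB : ∀ g, (Wbar * Sig * (M g)ᵀ).trace = (Wbar * Sig * Wᵀ).trace := by
    intro g
    have e : Wbar * Sig * (M g)ᵀ = (Wbar * (Sig * ((φ g)ᵀ * Wᵀ))) * ψ g := by
      rw [hMT g]; simp only [Matrix.mul_assoc]
    rw [e, Matrix.trace_mul_comm]
    have e2 : ψ g * (Wbar * (Sig * ((φ g)ᵀ * Wᵀ))) = Wbar * (φ g * (Sig * ((φ g)ᵀ * Wᵀ))) := by
      have h3 := congrArg (fun X => X * (Sig * ((φ g)ᵀ * Wᵀ))) (hWbar_equiv g)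
      simpa [Matrix.mul_assoc] using h3
    have e3 : φ g * (Sig * ((φ g)ᵀ * Wᵀ)) = Sig * Wᵀ := by
      have h3 := congrArg (fun X => X * Wᵀ) (hSinv g)
      simpa [Matrix.mul_assoc] using h3
    rw [e2, e3, ← Matrix.mul_assoc]
  have htr_symm : ∀ (A B : Matrix (Fin k) (Fin d) ℝ),
      (A * Sig * Bᵀ).trace = (B * Sig * Aᵀ).trace := by
    intro A B
    have h : (A * Sig * Bᵀ)ᵀ = B * Sig * Aᵀ := by
      rw [Matrix.transpose_mul, Matrix.transpose_mul, Matrix.transpose_transpose, hSig_symm,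
        Matrix.mul_assoc]
    calc (A * Sig * Bᵀ).trace = ((A * Sig * Bᵀ)ᵀ).trace := (Matrix.trace_transpose _).symm
      _ = (B * Sig * Aᵀ).trace := by rw [h]
  -- linearity of averaging under the trace pairing
  have hrep : ∀ (P N : Matrix (Fin k) (Fin d) ℝ),
      (N * Sig * Pᵀ).trace = ∑ i, ∑ a, N i a * (Sig * Pᵀ) a i := by
    intro P N
    rw [Matrix.mul_assoc]
    simp [Matrix.trace, Matrix.diag, Matrix.mul_apply]
  have hlin_int : ∀ (P : Matrix (Fin k) (Fin d) ℝ),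
      Integrable (fun g => (M g * Sig * Pᵀ).trace) lam := by
    intro P
    have he : (fun g => (M g * Sig * Pᵀ).trace)
        = fun g => ∑ i, ∑ a, M g i a * (Sig * Pᵀ) a i := funext fun g => hrep P (M g)
    rw [he]
    exact integrable_finset_sum _ fun i _ => integrable_finset_sum _ fun a _ =>
      (hMint i a).mul_const _
  have hlin : ∀ (P : Matrix (Fin k) (Fin d) ℝ),
      ∫ g, (M g * Sig * Pᵀ).trace ∂lam = (Wbar * Sig * Pᵀ).trace := by
    intro P
    calc ∫ g, (M g * Sig * Pᵀ).trace ∂lam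
        = ∫ g, ∑ i, ∑ a, M g i a * (Sig * Pᵀ) a i ∂lam :=
          integral_congr_ae (Filter.Eventually.of_forall fun g => hrep P (M g))
      _ = ∑ i, ∑ a, (∫ g, M g i a ∂lam) * (Sig * Pᵀ) a i := by
          rw [integral_finset_sum _ fun i _ => integrable_finset_sum _ fun a _ =>
            (hMint i a).mul_const _]
          refine Finset.sum_congr rfl fun i _ => ?_
          rw [integral_finset_sum _ fun a _ => (hMint i a).mul_const _]
          exact Finset.sum_congr rfl fun a _ => integral_mul_const _ _
      _ = (Wbar * Sig * Pᵀ).trace := by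
          rw [hrep P Wbar]
          exact Finset.sum_congr rfl fun i _ => Finset.sum_congr rfl fun a _ => by
            rw [← hWbarM i a]
  -- the averaged quadratic trace identity
  have hcross : (Wbar * Sig * Wᵀ).trace = (Wbar * Sig * Wbarᵀ).trace := by
    have h1 := hlin Wbar
    have h2 : ∀ g, (M g * Sig * Wbarᵀ).trace = (Wbar * Sig * Wᵀ).trace := fun g => by
      rw [htr_symm (M g) Wbar, htrB g]
    rw [integral_congr_ae (Filter.Eventually.of_forall h2)] at h1
    simpa using h1
  have hTpt : ∀ g, ((W - M g) * Sig * (W - M g)ᵀ).trace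
      = 2 * (W * Sig * Wᵀ).trace - 2 * (M g * Sig * Wᵀ).trace := by
    intro g
    have hexp : (W - M g) * Sig * (W - M g)ᵀ
        = W * Sig * Wᵀ - W * Sig * (M g)ᵀ - M g * Sig * Wᵀ + M g * Sig * (M g)ᵀ := by
      simp only [Matrix.sub_mul, Matrix.mul_sub, Matrix.transpose_sub]
      abel
    rw [hexp]
    simp only [Matrix.trace_sub, Matrix.trace_add]
    rw [htrA g, htr_symm W (M g)]
    ring
  have havg : ∫ g, ((W - M g) * Sig * (W - M g)ᵀ).trace ∂lam
      = 2 * ((W - Wbar) * Sig * (W - Wbar)ᵀ).trace := by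
    have hI : ∫ g, ((W - M g) * Sig * (W - M g)ᵀ).trace ∂lam
        = 2 * (W * Sig * Wᵀ).trace - 2 * (Wbar * Sig * Wᵀ).trace := by
      rw [integral_congr_ae (Filter.Eventually.of_forall hTpt),
        integral_sub (integrable_const _) ((hlin_int W).const_mul 2),
        integral_const_mul, integral_const_mul, hlin W, integral_const]
      simp
    rw [hI]
    have hexp2 : (W - Wbar) * Sig * (W - Wbar)ᵀ
        = W * Sig * Wᵀ - W * Sig * Wbarᵀ - Wbar * Sig * Wᵀ + Wbar * Sig * Wbarᵀ := by
      simp only [Matrix.sub_mul, Matrix.mul_sub, Matrix.transpose_sub]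
      abel
    rw [hexp2]
    simp only [Matrix.trace_sub, Matrix.trace_add]
    rw [htr_symm W Wbar]
    linarith [hcross]
  -- the quadratic form of the covariance
  have hquad : ∀ A : Matrix (Fin k) (Fin d) ℝ,
      ∫ x, (∑ i, ((A.mulVec x) i) ^ 2) ∂μ = (A * Sig * Aᵀ).trace := by
    intro A
    have hint : ∀ (i : Fin k) (j l : Fin d),
        Integrable (fun x : Fin d → ℝ => (A i j * A i l) * (x j * x l)) μ :=
      fun i j l => (hmom j l).const_mul _
    calc ∫ x, (∑ i, ((A.mulVec x) i) ^ 2) ∂μ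
        = ∫ x, ∑ i, ∑ j, ∑ l, (A i j * A i l) * (x j * x l) ∂μ := by
          refine integral_congr_ae (Filter.Eventually.of_forall fun x => ?_)
          refine Finset.sum_congr rfl fun i _ => ?_
          have e1 : (A.mulVec x) i = ∑ j, A i j * x j := rfl
          rw [sq, e1, Finset.sum_mul_sum]
          exact Finset.sum_congr rfl fun j _ => Finset.sum_congr rfl fun l _ => by ring
      _ = ∑ i, ∑ j, ∑ l, (A i j * A i l) * Sig j l := by
          rw [integral_finset_sum _ fun i _ => integrable_finset_sum _ fun j _ =>
            integrable_finset_sum _ fun l _ => hint i j l]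
          refine Finset.sum_congr rfl fun i _ => ?_
          rw [integral_finset_sum _ fun j _ => integrable_finset_sum _ fun l _ => hint i j l]
          refine Finset.sum_congr rfl fun j _ => ?_
          rw [integral_finset_sum _ fun l _ => hint i j l]
          refine Finset.sum_congr rfl fun l _ => ?_
          rw [integral_const_mul, hSig j l]
      _ = (A * Sig * Aᵀ).trace := by
          simp only [Matrix.trace, Matrix.diag, Matrix.mul_apply, Matrix.transpose_apply,
            Finset.sum_mul]
          refine Finset.sum_congr rfl fun i _ => ?_
          rw [Finset.sum_comm]
          exact Finset.sum_congr rfl fun a _ => Finset.sum_congr rfl fun b _ => by ring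
  -- conversion of the target trace
  have hconv : (((W - Wbar) * S)ᵀ * ((W - Wbar) * S)).trace
      = ((W - Wbar) * Sig * (W - Wbar)ᵀ).trace := by
    rw [Matrix.transpose_mul, hS_symm]
    calc (S * (W - Wbar)ᵀ * ((W - Wbar) * S)).trace
        = (S * ((W - Wbar)ᵀ * ((W - Wbar) * S))).trace := by rw [Matrix.mul_assoc]
      _ = (((W - Wbar)ᵀ * ((W - Wbar) * S)) * S).trace := by rw [Matrix.trace_mul_comm]
      _ = ((W - Wbar)ᵀ * ((W - Wbar) * Sig)).trace := by
          simp only [Matrix.mul_assoc, hSS]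
      _ = (((W - Wbar) * Sig) * (W - Wbar)ᵀ).trace := by rw [Matrix.trace_mul_comm]
  -- the product integrand
  set F : (Fin d → ℝ) → G → ℝ := fun x g => ∑ i, (((W - M g).mulVec x) i) ^ 2 with hFdef
  have hF_nonneg : ∀ x g, 0 ≤ F x g := fun x g => Finset.sum_nonneg fun i _ => sq_nonneg _
  set cF : ℝ := (k : ℝ) * ((d : ℝ) * (2 * K) ^ 2) with hcFdef
  have hF_bd : ∀ x g, F x g ≤ cF * ∑ j, (x j) ^ 2 := by
    intro x g
    have hi : ∀ i : Fin k, (((W - M g).mulVec x) i) ^ 2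
        ≤ ((d : ℝ) * (2 * K) ^ 2) * ∑ j, (x j) ^ 2 := by
      intro i
      have e1 : ((W - M g).mulVec x) i = ∑ j, (W - M g) i j * x j := rfl
      have h1 : (((W - M g).mulVec x) i) ^ 2
          ≤ (∑ j, ((W - M g) i j) ^ 2) * ∑ j, (x j) ^ 2 := by
        rw [e1]
        exact Finset.sum_mul_sq_le_sq_mul_sq _ _ _
      have h2 : ∑ j, ((W - M g) i j) ^ 2 ≤ (d : ℝ) * (2 * K) ^ 2 := by
        calc ∑ j, ((W - M g) i j) ^ 2 ≤ ∑ _j : Fin d, (2 * K) ^ 2 := by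
              refine Finset.sum_le_sum fun j _ => ?_
              have hb := hWM_bd g i j
              calc ((W - M g) i j) ^ 2 = |(W - M g) i j| ^ 2 := (sq_abs _).symm
                _ ≤ (2 * K) ^ 2 := pow_le_pow_left₀ (abs_nonneg _) hb 2
          _ = (d : ℝ) * (2 * K) ^ 2 := by
              simp [Finset.sum_const, Finset.card_univ, mul_comm]
      calc (((W - M g).mulVec x) i) ^ 2
          ≤ (∑ j, ((W - M g) i j) ^ 2) * ∑ j, (x j) ^ 2 := h1
        _ ≤ ((d : ℝ) * (2 * K) ^ 2) * ∑ j, (x j) ^ 2 :=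
            mul_le_mul_of_nonneg_right h2 (Finset.sum_nonneg fun j _ => sq_nonneg _)
    calc F x g ≤ ∑ _i : Fin k, ((d : ℝ) * (2 * K) ^ 2) * ∑ j, (x j) ^ 2 :=
          Finset.sum_le_sum fun i _ => hi i
      _ = cF * ∑ j, (x j) ^ 2 := by
          rw [hcFdef]
          simp [Finset.sum_const, Finset.card_univ]
          ring
  have hF_meas : Measurable (Function.uncurry F) := by
    have he : Function.uncurry F
        = fun p : (Fin d → ℝ) × G => ∑ i, (∑ j, (W i j - M p.2 i j) * p.1 j) ^ 2 := by
      funext p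
      exact Finset.sum_congr rfl fun i _ => rfl
    rw [he]
    refine Finset.measurable_sum _ fun i _ => ?_
    refine Measurable.pow_const ?_ 2
    refine Finset.measurable_sum _ fun j _ => ?_
    exact ((measurable_const.sub ((hM_meas i j).comp measurable_snd)).mul
      ((measurable_pi_apply j).comp measurable_fst))
  have hsum_sq_int : Integrable (fun x : Fin d → ℝ => ∑ j, (x j) ^ 2) μ :=
    integrable_finset_sum _ fun j _ => by simpa [sq] using hmom j j
  have hbound_int : Integrable (fun p : (Fin d → ℝ) × G => cF * ∑ j, (p.1 j) ^ 2)
      (μ.prod lam) := by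
    have hmap : Measure.map Prod.fst (μ.prod lam) = μ := by
      rw [Measure.map_fst_prod]; simp
    have hmeas : Measurable (fun x : Fin d → ℝ => ∑ j, (x j) ^ 2) :=
      Finset.measurable_sum _ fun j _ => (measurable_pi_apply j).pow_const 2
    have h1 : Integrable ((fun x : Fin d → ℝ => ∑ j, (x j) ^ 2) ∘ Prod.fst) (μ.prod lam) := by
      rw [← integrable_map_measure (by rw [hmap]; exact hmeas.aestronglyMeasurable)
        measurable_fst.aemeasurable]
      rw [hmap]
      exact hsum_sq_int
    exact (h1.const_mul cF)
  have hFint : Integrable (Function.uncurry F) (μ.prod lam) := by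
    refine hbound_int.mono' hF_meas.aestronglyMeasurable ?_
    filter_upwards with p
    show ‖F p.1 p.2‖ ≤ cF * ∑ j, (p.1 j) ^ 2
    rw [Real.norm_eq_abs, abs_of_nonneg (hF_nonneg p.1 p.2)]
    exact hF_bd p.1 p.2
  have hswap : ∫ x, ∫ g, F x g ∂lam ∂μ = ∫ g, ∫ x, F x g ∂μ ∂lam :=
    integral_integral_swap hFint
  have hFleft : Integrable (fun x => ∫ g, F x g ∂lam) μ := hFint.integral_prod_left
  -- the pointwise bound
  have hpt : ∀ x : Fin d → ℝ,
      (∑ i, (σ ((W.mulVec x) i)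
        - (∫ g, (ψ g⁻¹).mulVec (fun i' => σ ((W.mulVec ((φ g).mulVec x)) i')) ∂lam) i) ^ 2)
      ≤ C ^ 2 * ∫ g, F x g ∂lam := by
    intro x
    set v : G → Fin k → ℝ := fun g i => σ (((M g).mulVec x) i) with hvdef
    have hfun : ∀ g, (ψ g⁻¹).mulVec (fun i' => σ ((W.mulVec ((φ g).mulVec x)) i')) = v g := by
      intro g
      have harg : (ψ g⁻¹).mulVec (W.mulVec ((φ g).mulVec x)) = (M g).mulVec x := by
        rw [Matrix.mulVec_mulVec, Matrix.mulVec_mulVec]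
      rw [← hσ_comm g⁻¹ (W.mulVec ((φ g).mulVec x)), harg]
    have hMv_meas : ∀ i : Fin k, Measurable fun g => ((M g).mulVec x) i := by
      intro i
      have he : (fun g => ((M g).mulVec x) i) = fun g => ∑ j, M g i j * x j := rfl
      rw [he]
      exact Finset.measurable_sum _ fun j _ => (hM_meas i j).mul_const _
    have hv_meas : ∀ i, Measurable fun g => v g i := fun i =>
      hσc.measurable.comp (hMv_meas i)
    set cv : ℝ := |σ 0| + C * ∑ j, K * |x j| with hcvdef
    have hcv0 : 0 ≤ cv :=
      add_nonneg (abs_nonneg _) (mul_nonneg hC (Finset.sum_nonneg fun j _ =>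
        mul_nonneg hK0 (abs_nonneg _)))
    have hMv_bd : ∀ g i, |((M g).mulVec x) i| ≤ ∑ j, K * |x j| := by
      intro g i
      have he : ((M g).mulVec x) i = ∑ j, M g i j * x j := rfl
      rw [he]
      calc |∑ j, M g i j * x j| ≤ ∑ j, |M g i j * x j| := Finset.abs_sum_le_sum_abs _ _
        _ ≤ ∑ j, K * |x j| := Finset.sum_le_sum fun j _ => by
            rw [abs_mul]
            exact mul_le_mul_of_nonneg_right (hM_bd g i j) (abs_nonneg _)
    have hv_bd : ∀ g i, |v g i| ≤ cv := by
      intro g i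
      have h1 : |σ (((M g).mulVec x) i) - σ 0| ≤ C * |((M g).mulVec x) i| := by
        simpa using hσ_lip (((M g).mulVec x) i) 0
      have h2 := hMv_bd g i
      have h3 : |v g i| ≤ |σ 0| + |σ (((M g).mulVec x) i) - σ 0| := by
        have := abs_add_le (σ 0) (σ (((M g).mulVec x) i) - σ 0)
        simpa [hvdef] using this
      have h4 : C * |((M g).mulVec x) i| ≤ C * ∑ j, K * |x j| :=
        mul_le_mul_of_nonneg_left h2 hC
      rw [hcvdef]
      linarith
    have hvi_int : ∀ i, Integrable (fun g => v g i) lam :=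
      fun i => hbint _ cv (hv_meas i) (fun g => hv_bd g i)
    have hv_int : Integrable v lam := by
      refine (integrable_const cv).mono'
        (measurable_pi_lambda _ hv_meas).aestronglyMeasurable ?_
      filter_upwards with g
      rw [pi_norm_le_iff_of_nonneg hcv0]
      intro i
      rw [Real.norm_eq_abs]
      exact hv_bd g i
    have hcomp : ∀ i, (∫ g, v g ∂lam) i = ∫ g, v g i ∂lam := by
      intro i
      exact ((ContinuousLinearMap.proj (R := ℝ) (φ := fun _ : Fin k => ℝ) i).integral_comp_comm
        hv_int).symm
    have hgoal1 : (∫ g, (ψ g⁻¹).mulVec (fun i' => σ ((W.mulVec ((φ g).mulVec x)) i')) ∂lam)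
        = ∫ g, v g ∂lam := by
      congr 1
      funext g
      exact hfun g
    rw [hgoal1]
    have hdiff_meas : ∀ i : Fin k, Measurable fun g => ((W - M g).mulVec x) i := by
      intro i
      have he : (fun g => ((W - M g).mulVec x) i) = fun g => ∑ j, (W i j - M g i j) * x j := rfl
      rw [he]
      exact Finset.measurable_sum _ fun j _ =>
        (measurable_const.sub (hM_meas i j)).mul_const _
    have hdiff_bd : ∀ g i, |((W - M g).mulVec x) i| ≤ ∑ j, 2 * K * |x j| := by
      intro g i
      have he : ((W - M g).mulVec x) i = ∑ j, (W - M g) i j * x j := rfl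
      rw [he]
      calc |∑ j, (W - M g) i j * x j| ≤ ∑ j, |(W - M g) i j * x j| :=
            Finset.abs_sum_le_sum_abs _ _
        _ ≤ ∑ j, 2 * K * |x j| := Finset.sum_le_sum fun j _ => by
            rw [abs_mul]
            exact mul_le_mul_of_nonneg_right (hWM_bd g i j) (abs_nonneg _)
    have hdiff_int : ∀ i : Fin k,
        Integrable (fun g => C ^ 2 * (((W - M g).mulVec x) i) ^ 2) lam := by
      intro i
      refine hbint _ (C ^ 2 * (∑ j, 2 * K * |x j|) ^ 2)
        (((hdiff_meas i).pow_const 2).const_mul _) (fun g => ?_)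
      rw [abs_mul, abs_pow, abs_pow]
      have h0 : |((W - M g).mulVec x) i| ^ 2 ≤ (∑ j, 2 * K * |x j|) ^ 2 :=
        pow_le_pow_left₀ (abs_nonneg _) (hdiff_bd g i) 2
      have hC2 : |C| ^ 2 = C ^ 2 := by rw [sq_abs]
      rw [hC2]
      exact mul_le_mul_of_nonneg_left h0 (sq_nonneg C)
    have hterm : ∀ i : Fin k, (σ ((W.mulVec x) i) - (∫ g, v g ∂lam) i) ^ 2
        ≤ ∫ g, C ^ 2 * (((W - M g).mulVec x) i) ^ 2 ∂lam := by
      intro i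
      rw [hcomp i]
      set h : G → ℝ := fun g => σ ((W.mulVec x) i) - v g i with hhdef
      have h_eq : σ ((W.mulVec x) i) - ∫ g, v g i ∂lam = ∫ g, h g ∂lam := by
        rw [integral_sub (integrable_const _) (hvi_int i), integral_const]
        simp
      rw [h_eq]
      have hmeas_h : Measurable h := measurable_const.sub (hv_meas i)
      have hbd_h : ∀ g, |h g| ≤ |σ ((W.mulVec x) i)| + cv := by
        intro g
        calc |h g| ≤ |σ ((W.mulVec x) i)| + |v g i| := abs_sub _ _
          _ ≤ |σ ((W.mulVec x) i)| + cv := by linarith [hv_bd g i]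
      have hint_h : Integrable h lam := hbint _ _ hmeas_h hbd_h
      have hint_h2 : Integrable (fun g => h g ^ 2) lam := by
        refine hbint _ ((|σ ((W.mulVec x) i)| + cv) ^ 2) (hmeas_h.pow_const 2) (fun g => ?_)
        rw [abs_pow]
        exact pow_le_pow_left₀ (abs_nonneg _) (hbd_h g) 2
      refine (aux_sq_integral_le lam hint_h hint_h2).trans ?_
      refine integral_mono hint_h2 (hdiff_int i) fun g => ?_
      have habs : |h g| ≤ C * |((W - M g).mulVec x) i| := by
        have hl := hσ_lip ((W.mulVec x) i) (((M g).mulVec x) i)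
        have e : ((W - M g).mulVec x) i = (W.mulVec x) i - ((M g).mulVec x) i := by
          rw [Matrix.sub_mulVec]
          rfl
        rw [e]
        simpa [hhdef, hvdef] using hl
      calc h g ^ 2 = |h g| ^ 2 := (sq_abs _).symm
        _ ≤ (C * |((W - M g).mulVec x) i|) ^ 2 := pow_le_pow_left₀ (abs_nonneg _) habs 2
        _ = C ^ 2 * (((W - M g).mulVec x) i) ^ 2 := by rw [mul_pow, sq_abs]
    calc ∑ i, (σ ((W.mulVec x) i) - (∫ g, v g ∂lam) i) ^ 2
        ≤ ∑ i, ∫ g, C ^ 2 * (((W - M g).mulVec x) i) ^ 2 ∂lam :=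
          Finset.sum_le_sum fun i _ => hterm i
      _ = ∫ g, ∑ i, C ^ 2 * (((W - M g).mulVec x) i) ^ 2 ∂lam :=
          (integral_finset_sum _ fun i _ => hdiff_int i).symm
      _ = C ^ 2 * ∫ g, F x g ∂lam := by
          rw [← integral_const_mul]
          refine integral_congr_ae (Filter.Eventually.of_forall fun g => ?_)
          exact (Finset.mul_sum _ _ _).symm
  refine ⟨?_, ?_⟩
  · calc (∫ x, ∑ i, (σ ((W.mulVec x) i)
        - (∫ g, (ψ g⁻¹).mulVec (fun i' => σ ((W.mulVec ((φ g).mulVec x)) i')) ∂lam) i) ^ 2 ∂μ)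
        ≤ ∫ x, C ^ 2 * ∫ g, F x g ∂lam ∂μ :=
          integral_mono_of_nonneg
            (Filter.Eventually.of_forall fun x => Finset.sum_nonneg fun i _ => sq_nonneg _)
            (hFleft.const_mul _) (Filter.Eventually.of_forall hpt)
      _ = C ^ 2 * ∫ x, ∫ g, F x g ∂lam ∂μ := integral_const_mul _ _
      _ = C ^ 2 * ∫ g, ∫ x, F x g ∂μ ∂lam := by rw [hswap]
      _ = C ^ 2 * ∫ g, ((W - M g) * Sig * (W - M g)ᵀ).trace ∂lam := by
          congr 1
          refine integral_congr_ae (Filter.Eventually.of_forall fun g => ?_)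
          exact hquad (W - M g)
      _ = C ^ 2 * (2 * ((W - Wbar) * Sig * (W - Wbar)ᵀ).trace) := by rw [havg]
      _ = 2 * C ^ 2 * (((W - Wbar) * S)ᵀ * ((W - Wbar) * S)).trace := by
          rw [hconv]; ring
  · have hfs := aux_frob_submul (W - Wbar) S
    calc 2 * C ^ 2 * (((W - Wbar) * S)ᵀ * ((W - Wbar) * S)).trace
        ≤ 2 * C ^ 2 * ((Sᵀ * S).trace * ((W - Wbar)ᵀ * (W - Wbar)).trace) :=
          mul_le_mul_of_nonneg_left hfs (by positivity)
      _ = 2 * C ^ 2 * (Sᵀ * S).trace * ((W - Wbar)ᵀ * (W - Wbar)).trace := by ring
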